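/- K3 and LP are operationally dual: for all finite sets of formulas Γ, Δ, the inference Γ ⇒ Δ is K3-valid if and only if ∼(Δ) ⇒ ∼(Γ) is LP-valid, and Γ ⇒ Δ is LP-valid if and only if ∼(Δ) ⇒ ∼(Γ) is K3-valid. -/
import Mathlib


/-- Propositional formulas over a countably infinite set of variables,
with constants ⊤, ⊥, λ and connectives ¬, ∨, ∧. -/
inductive Fm : Type
  | var : ℕ → Fm
  | top : Fm
  | bot : Fm
  | lam : Fm
  | neg : Fm → Fm
  | disj : Fm → Fm → Fm
  | conj : Fm → Fm → Fm
  deriving DecidableEq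

/-- A function `v : Var → ℚ` is an SK-valuation if it takes values in {0, 1/2, 1}. -/
def SK (v : ℕ → ℚ) : Prop := ∀ p : ℕ, v p = 0 ∨ v p = 1/2 ∨ v p = 1

/-- Extension of a valuation to all formulas by the Strong Kleene scheme. -/
def eval (v : ℕ → ℚ) : Fm → ℚ
  | .var p => v p
  | .top => 1
  | .bot => 0
  | .lam => 1/2
  | .neg φ => 1 - eval v φ
  | .disj φ ψ => max (eval v φ) (eval v ψ)
  | .conj φ ψ => min (eval v φ) (eval v ψ)

/-- An inference is a pair of finite sets of formulas. -/
abbrev Inference := Finset Fm × Finset Fm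

def K3Valid (Γ Δ : Finset Fm) : Prop :=
  ∀ v : ℕ → ℚ, SK v → (∀ γ ∈ Γ, eval v γ = 1) → ∃ δ ∈ Δ, eval v δ = 1

def LPValid (Γ Δ : Finset Fm) : Prop :=
  ∀ v : ℕ → ℚ, SK v → (∀ γ ∈ Γ, eval v γ ≠ 0) → ∃ δ ∈ Δ, eval v δ ≠ 0

def STValid (Γ Δ : Finset Fm) : Prop :=
  ∀ v : ℕ → ℚ, SK v → (∀ γ ∈ Γ, eval v γ = 1) → ∃ δ ∈ Δ, eval v δ ≠ 0

def TSValid (Γ Δ : Finset Fm) : Prop :=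
  ∀ v : ℕ → ℚ, SK v → (∀ γ ∈ Γ, eval v γ ≠ 0) → ∃ δ ∈ Δ, eval v δ = 1

def K3plus : Set Inference := {I | K3Valid I.1 I.2}
def LPplus : Set Inference := {I | LPValid I.1 I.2}
def STplus : Set Inference := {I | STValid I.1 I.2}
def TSplus : Set Inference := {I | TSValid I.1 I.2}

/-- Relative product: the middle term is a single formula. -/
def RelProd (R S : Set Inference) : Set Inference :=
  {I | ∃ φ : Fm, (I.1, ({φ} : Finset Fm)) ∈ R ∧ (({φ} : Finset Fm), I.2) ∈ S}

/-- Relative sum: for every single formula, one of the two components holds. -/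
def RelSum (R S : Set Inference) : Set Inference :=
  {I | ∀ φ : Fm, (I.1, ({φ} : Finset Fm)) ∈ R ∨ (({φ} : Finset Fm), I.2) ∈ S}

/-- The operational-dual map `∼`, interchanging ⊤ with ⊥ and ∧ with ∨. -/
def opDual : Fm → Fm
  | .var p => .var p
  | .top => .bot
  | .bot => .top
  | .lam => .lam
  | .neg φ => .neg (opDual φ)
  | .conj φ ψ => .disj (opDual φ) (opDual ψ)
  | .disj φ ψ => .conj (opDual φ) (opDual ψ)


lemma opDual_invol (φ : Fm) : opDual (opDual φ) = φ := by
  induction φ <;> simp [opDual, *]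

lemma eval_opDual (v : ℕ → ℚ) (φ : Fm) :
    eval (fun p => 1 - v p) (opDual φ) = 1 - eval v φ := by
  induction φ with
  | var p => rfl
  | top => norm_num [opDual, eval]
  | bot => norm_num [opDual, eval]
  | lam => norm_num [opDual, eval]
  | neg φ ih => simp [opDual, eval, ih]
  | disj φ ψ ih1 ih2 =>
      simp only [opDual, eval, ih1, ih2]
      rcases le_total (eval v φ) (eval v ψ) with h | h <;>
        simp [max_eq_right h, max_eq_left h, min_eq_left, min_eq_right, sub_le_sub_left, h] <;> linarith
  | conj φ ψ ih1 ih2 =>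
      simp only [opDual, eval, ih1, ih2]
      rcases le_total (eval v φ) (eval v ψ) with h | h <;>
        simp [min_eq_left h, min_eq_right h, max_eq_left, max_eq_right, sub_le_sub_left, h] <;> linarith

lemma SK_flip {v : ℕ → ℚ} (h : SK v) : SK (fun p => 1 - v p) := by
  intro p
  rcases h p with h | h | h <;> simp [h] <;> norm_num

lemma K3_dual (Γ Δ : Finset Fm) :
    K3Valid Γ Δ ↔ LPValid (Δ.image opDual) (Γ.image opDual) := by
  constructor
  · intro h w hw hprem
    set v : ℕ → ℚ := fun p => 1 - w p with hv
    have hwv : w = fun p => 1 - v p := by funext p; simp [hv]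
    have hSKv : SK v := SK_flip hw
    by_contra hcon
    push_neg at hcon
    have hall : ∀ γ ∈ Γ, eval v γ = 1 := by
      intro γ hγ
      have := hcon (opDual γ) (Finset.mem_image_of_mem _ hγ)
      rw [hwv, eval_opDual] at this
      linarith
    obtain ⟨δ, hδ, hδ1⟩ := h v hSKv hall
    have := hprem (opDual δ) (Finset.mem_image_of_mem _ hδ)
    rw [hwv, eval_opDual, hδ1] at this
    simp at this
  · intro h v hv hall
    set w : ℕ → ℚ := fun p => 1 - v p with hw
    have hSKw : SK w := SK_flip hv
    by_contra hcon
    push_neg at hcon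
    have hprem : ∀ δ' ∈ Δ.image opDual, eval w δ' ≠ 0 := by
      intro δ' hδ'
      obtain ⟨δ, hδ, rfl⟩ := Finset.mem_image.mp hδ'
      rw [hw, eval_opDual]
      intro h0
      have : eval v δ = 1 := by linarith
      exact hcon δ hδ this
    obtain ⟨γ', hγ', hγ0⟩ := h w hSKw hprem
    obtain ⟨γ, hγ, rfl⟩ := Finset.mem_image.mp hγ'
    rw [hw, eval_opDual, hall γ hγ] at hγ0
    simp at hγ0

theorem K3_LP_operationally_dual (Γ Δ : Finset Fm) :
    (K3Valid Γ Δ ↔ LPValid (Δ.image opDual) (Γ.image opDual)) ∧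
    (LPValid Γ Δ ↔ K3Valid (Δ.image opDual) (Γ.image opDual)) := by
  refine ⟨K3_dual Γ Δ, ?_⟩
  have h := K3_dual (Δ.image opDual) (Γ.image opDual)
  rw [Finset.image_image, Finset.image_image] at h
  simp only [Function.comp_def, opDual_invol, Finset.image_id'] at h
  exact h.symm
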